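/- Every multiplier (2-cocycle with values in the circle group 𝕋) on a finitely generated subsemigroup S of ℤ^d with S - S = ℤ^d extends to a multiplier on ℤ^d. That is, if ω : S × S → 𝕋 satisfies ω(r,s)ω(r+s,t) = ω(r,s+t)ω(s,t) for all r,s,t ∈ S, then there exists ω̃ : ℤ^d × ℤ^d → 𝕋 satisfying the same cocycle identity on ℤ^d and restricting to ω on S × S. -/

import Mathlib

private lemma pi_decomp {d : ℕ} (x : Fin d → ℤ) :
    x = ∑ i, x i • (Pi.single i (1:ℤ) : Fin d → ℤ) := by
  conv_lhs => rw [← Finset.univ_sum_single x]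
  refine Finset.sum_congr rfl fun i _ => ?_
  ext j
  by_cases h : j = i <;> simp [h, Pi.single_apply]

private lemma hom_sum_zsmul {G : Type*} [AddCommGroup G] (g : G → Circle)
    (h : ∀ x y, g (x + y) = g x * g y) {ι : Type*} (s : Finset ι) (c : ι → ℤ) (v : ι → G) :
    g (∑ i ∈ s, c i • v i) = ∏ i ∈ s, g (v i) ^ c i := by
  let F : G →+ Additive Circle :=
    AddMonoidHom.mk' (fun m => Additive.ofMul (g m)) (fun a b => congrArg Additive.ofMul (h a b))
  have hF : ∀ m, g m = Additive.toMul (F m) := fun m => rfl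
  rw [hF, map_sum]
  rw [toMul_sum]
  refine Finset.prod_congr rfl fun i _ => ?_
  rw [map_zsmul, toMul_zsmul, ← hF]


structure TwData (M : Type*) [AddCommMonoid M] where
  sig : M → M → Circle
  coc : ∀ a b c : M, sig a b * sig (a+b) c = sig a (b+c) * sig b c
  symm : ∀ a b : M, sig a b = sig b a
  zl : ∀ a : M, sig 0 a = 1

structure Tw {M : Type*} [AddCommMonoid M] (D : TwData M) where
  a : M
  z : Circle

namespace Tw
variable {M : Type*} [AddCommMonoid M] {D : TwData M}

theorem ext' {x y : Tw D} (h1 : x.a = y.a) (h2 : x.z = y.z) : x = y := by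
  cases x; cases y; cases h1; cases h2; rfl

noncomputable instance : CommMonoid (Tw D) where
  mul x y := ⟨x.a + y.a, x.z * y.z * D.sig x.a y.a⟩
  one := ⟨0, 1⟩
  one_mul x := ext' (zero_add _) (by show 1 * x.z * D.sig 0 x.a = x.z; rw [D.zl]; simp)
  mul_one x := ext' (add_zero _) (by show x.z * 1 * D.sig x.a 0 = x.z; rw [D.symm _ 0, D.zl]; simp)
  mul_comm x y := ext' (add_comm _ _) (by show x.z * y.z * D.sig x.a y.a = y.z * x.z * D.sig y.a x.a; rw [D.symm y.a x.a, mul_comm x.z y.z])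
  mul_assoc x y z := ext' (add_assoc _ _ _) (by
    show x.z * y.z * D.sig x.a y.a * z.z * D.sig (x.a + y.a) z.a
        = x.z * (y.z * z.z * D.sig y.a z.a) * D.sig x.a (y.a + z.a)
    have h := D.coc x.a y.a z.a
    have h' : (D.sig x.a y.a : ℂ) * D.sig (x.a+y.a) z.a = D.sig x.a (y.a+z.a) * D.sig y.a z.a :=
      congrArg Subtype.val h
    ext; push_cast; linear_combination (x.z : ℂ) * y.z * z.z * h')

@[simp] theorem a_mul (x y : Tw D) : (x * y).a = x.a + y.a := rfl
@[simp] theorem a_mk (x : M) (z : Circle) : (Tw.mk (D := D) x z).a = x := rfl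
@[simp] theorem z_mk (x : M) (z : Circle) : (Tw.mk (D := D) x z).z = z := rfl
theorem z_mul (x y : Tw D) : (x * y).z = x.z * y.z * D.sig x.a y.a := rfl
@[simp] theorem a_one : (1 : Tw D).a = 0 := rfl
@[simp] theorem z_one : (1 : Tw D).z = 1 := rfl

@[simp] theorem a_pow (x : Tw D) (n : ℕ) : (x ^ n).a = n • x.a := by
  induction n with
  | zero => simp
  | succ n ih => rw [pow_succ, a_mul, ih, succ_nsmul]

@[simp] theorem a_prod {ι : Type*} (s : Finset ι) (f : ι → Tw D) :
    (∏ i ∈ s, f i).a = ∑ i ∈ s, (f i).a := by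
  classical
  induction s using Finset.cons_induction with
  | empty => simp
  | cons i s hi ih => rw [Finset.prod_cons, Finset.sum_cons, a_mul, ih]

end Tw

set_option maxHeartbeats 1000000 in
theorem stmt_12 (d : ℕ) (S : AddSubmonoid (Fin d → ℤ)) (hfg : S.FG)
    (hgrp : ∀ x : Fin d → ℤ, ∃ s ∈ S, ∃ t ∈ S, x = s - t)
    (ω : (Fin d → ℤ) → (Fin d → ℤ) → Circle)
    (hcoc : ∀ r s t : Fin d → ℤ, r ∈ S → s ∈ S → t ∈ S →
      ω r s * ω (r + s) t = ω r (s + t) * ω s t)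
    (hnorm : ∀ x ∈ S, ω 0 x = 1 ∧ ω x 0 = 1) :
    ∃ W : (Fin d → ℤ) → (Fin d → ℤ) → Circle,
      (∀ r s t : Fin d → ℤ, W r s * W (r + s) t = W r (s + t) * W s t) ∧
      (∀ x : Fin d → ℤ, W 0 x = 1 ∧ W x 0 = 1) ∧
      (∀ r ∈ S, ∀ s ∈ S, W r s = ω r s) := by
  classical
  choose p hpS q hqS hpq using hgrp
  set χ : (Fin d → ℤ) → (Fin d → ℤ) → Circle := fun x y => ω x y / ω y x with hχ
  -- χ is multiplicative in the first variable on S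
  have chi_addl : ∀ r s t : Fin d → ℤ, r ∈ S → s ∈ S → t ∈ S →
      χ (r + s) t = χ r t * χ s t := by
    intro r s t hr hs ht
    have h1 := hcoc r s t hr hs ht
    have h2 := hcoc r t s hr ht hs
    have h3 := hcoc t r s ht hr hs
    rw [add_comm t s] at h2
    rw [add_comm t r] at h3
    have h1' : (ω r s : ℂ) * ω (r+s) t = ω r (s+t) * ω s t := congrArg Subtype.val h1
    have h2' : (ω r t : ℂ) * ω (r+t) s = ω r (s+t) * ω t s := congrArg Subtype.val h2
    have h3' : (ω t r : ℂ) * ω (r+t) s = ω t (r+s) * ω r s := congrArg Subtype.val h3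
    have hA : (ω r s : ℂ) ≠ 0 := Circle.coe_ne_zero _
    have claim' : (ω (r+s) t : ℂ) * ω t r * ω t s = ω t (r+s) * ω r t * ω s t := by
      apply mul_left_cancel₀ hA
      linear_combination (ω t r : ℂ) * (ω t s : ℂ) * h1' - (ω s t : ℂ) * (ω t r : ℂ) * h2'
        + (ω r t : ℂ) * (ω s t : ℂ) * h3'
    simp only [hχ]
    ext
    push_cast
    field_simp
    linear_combination claim'
  have chi_inv : ∀ x y, χ y x = (χ x y)⁻¹ := by
    intro x y
    simp only [hχ]
    ext; push_cast; field_simp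
  have chi_self : ∀ x, χ x x = 1 := fun x => div_self' _
  have chi_addr : ∀ r s t : Fin d → ℤ, r ∈ S → s ∈ S → t ∈ S →
      χ t (r + s) = χ t r * χ t s := by
    intro r s t hr hs ht
    rw [chi_inv (r+s) t, chi_addl r s t hr hs ht, mul_inv, ← chi_inv r t, ← chi_inv s t]
  -- difference invariance, left slot
  have dinv_l : ∀ s t s' t' u : Fin d → ℤ, s ∈ S → t ∈ S → s' ∈ S → t' ∈ S → u ∈ S →
      s + t' = s' + t → χ s u / χ t u = χ s' u / χ t' u := by
    intro s t s' t' u hs ht hs' ht' hu hstt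
    have e1 : χ s u * χ t' u = χ s' u * χ t u := by
      rw [← chi_addl s t' u hs ht' hu, ← chi_addl s' t u hs' ht hu, hstt]
    ext
    have e1' : (χ s u : ℂ) * χ t' u = χ s' u * χ t u := congrArg Subtype.val e1
    push_cast
    field_simp
    linear_combination e1'
  have dinv_r : ∀ u s t s' t' : Fin d → ℤ, s ∈ S → t ∈ S → s' ∈ S → t' ∈ S → u ∈ S →
      s + t' = s' + t → χ u s / χ u t = χ u s' / χ u t' := by
    intro u s t s' t' hs ht hs' ht' hu hstt
    have e1 : χ u s * χ u t' = χ u s' * χ u t := by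
      rw [← chi_addr s t' u hs ht' hu, ← chi_addr s' t u hs' ht hu, hstt]
    have e1' : (χ u s : ℂ) * χ u t' = χ u s' * χ u t := congrArg Subtype.val e1
    ext
    push_cast
    field_simp
    linear_combination e1'
  have grp4 : ∀ a b c e : Circle, (a/b)/(c/e) = (a/c)/(b/e) := by
    intro a b c e; ext; push_cast; field_simp
  set χt : (Fin d → ℤ) → (Fin d → ℤ) → Circle := fun x y =>
    (χ (p x) (p y) / χ (q x) (p y)) / (χ (p x) (q y) / χ (q x) (q y)) with hχt
  have chT_gen : ∀ x y s t u v : Fin d → ℤ, s ∈ S → t ∈ S → u ∈ S → v ∈ S →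
      x = s - t → y = u - v → χt x y = (χ s u / χ t u) / (χ s v / χ t v) := by
    intro x y s t u v hs ht hu hv hx hy
    have hc1 : p x + t = s + q x := by
      have h1 : p x - q x = s - t := by rw [← hpq x, hx]
      rw [sub_eq_sub_iff_add_eq_add] at h1; exact h1
    have hc2 : p y + v = u + q y := by
      have h1 : p y - q y = u - v := by rw [← hpq y, hy]
      rw [sub_eq_sub_iff_add_eq_add] at h1; exact h1
    have d1 := dinv_l (p x) (q x) s t (p y) (hpS x) (hqS x) hs ht (hpS y) hc1
    have d2 := dinv_l (p x) (q x) s t (q y) (hpS x) (hqS x) hs ht (hqS y) hc1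
    have d3 := dinv_r s (p y) (q y) u v (hpS y) (hqS y) hu hv hs hc2
    have d4 := dinv_r t (p y) (q y) u v (hpS y) (hqS y) hu hv ht hc2
    simp only [hχt]
    rw [d1, d2, grp4, d3, d4, grp4]
  have chi_zero : ∀ x ∈ S, χ 0 x = 1 ∧ χ x 0 = 1 := by
    intro x hx
    have h1 := (hnorm x hx).1
    have h2 := (hnorm x hx).2
    constructor <;> · simp only [hχ]; rw [h1, h2]; simp
  have chT_eq_chi : ∀ r s' : Fin d → ℤ, r ∈ S → s' ∈ S → χt r s' = χ r s' := by
    intro r s' hr hs'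
    rw [chT_gen r s' r 0 s' 0 hr S.zero_mem hs' S.zero_mem (sub_zero r).symm (sub_zero s').symm]
    rw [(chi_zero s' hs').1, (chi_zero r hr).2, chi_self 0]
    simp
  have chT_add_l : ∀ x y w : Fin d → ℤ, χt (x + y) w = χt x w * χt y w := by
    intro x y w
    have hxy : x + y = (p x + p y) - (q x + q y) := by
      conv_lhs => rw [hpq x, hpq y]
      abel
    rw [chT_gen (x+y) w (p x + p y) (q x + q y) (p w) (q w)
      (S.add_mem (hpS x) (hpS y)) (S.add_mem (hqS x) (hqS y)) (hpS w) (hqS w) hxy (hpq w)]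
    rw [chi_addl (p x) (p y) (p w) (hpS x) (hpS y) (hpS w),
        chi_addl (p x) (p y) (q w) (hpS x) (hpS y) (hqS w),
        chi_addl (q x) (q y) (p w) (hqS x) (hqS y) (hpS w),
        chi_addl (q x) (q y) (q w) (hqS x) (hqS y) (hqS w)]
    simp only [hχt]
    ext; push_cast; field_simp
  have chT_add_r : ∀ x y w : Fin d → ℤ, χt w (x + y) = χt w x * χt w y := by
    intro x y w
    have hxy : x + y = (p x + p y) - (q x + q y) := by
      conv_lhs => rw [hpq x, hpq y]
      abel
    rw [chT_gen w (x+y) (p w) (q w) (p x + p y) (q x + q y)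
      (hpS w) (hqS w) (S.add_mem (hpS x) (hpS y)) (S.add_mem (hqS x) (hqS y)) (hpq w) hxy]
    rw [chi_addr (p x) (p y) (p w) (hpS x) (hpS y) (hpS w),
        chi_addr (p x) (p y) (q w) (hpS x) (hpS y) (hqS w),
        chi_addr (q x) (q y) (p w) (hqS x) (hqS y) (hpS w),
        chi_addr (q x) (q y) (q w) (hqS x) (hqS y) (hqS w)]
    simp only [hχt]
    ext; push_cast; field_simp
  have chT_self : ∀ x : Fin d → ℤ, χt x x = 1 := by
    intro x
    simp only [hχt]
    rw [chi_self (p x), chi_self (q x), chi_inv (p x) (q x)]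
    ext; push_cast; field_simp
  have chT_antisym : ∀ x y : Fin d → ℤ, χt y x = (χt x y)⁻¹ := by
    intro x y
    simp only [hχt]
    rw [chi_inv (p x) (p y), chi_inv (p x) (q y), chi_inv (q x) (p y), chi_inv (q x) (q y)]
    ext; push_cast; field_simp
  set ee : Fin d → (Fin d → ℤ) := fun i => Pi.single i 1 with hee
  have chT_decomp : ∀ x y : Fin d → ℤ,
      χt x y = ∏ i, ∏ j, χt (ee i) (ee j) ^ (x i * y j) := by
    intro x y
    have h1 : χt x y = ∏ i, χt (ee i) y ^ (x i) := by
      conv_lhs => rw [pi_decomp x]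
      exact hom_sum_zsmul (fun z => χt z y) (fun a b => chT_add_l a b y) Finset.univ x ee
    have h2 : ∀ i, χt (ee i) y = ∏ j, χt (ee i) (ee j) ^ (y j) := by
      intro i
      conv_lhs => rw [pi_decomp y]
      exact hom_sum_zsmul (fun z => χt (ee i) z) (fun a b => chT_add_r a b (ee i)) Finset.univ y ee
    rw [h1]
    refine Finset.prod_congr rfl fun i _ => ?_
    rw [h2 i, ← Finset.prod_zpow]
    refine Finset.prod_congr rfl fun j _ => ?_
    rw [← zpow_mul, mul_comm (y j) (x i)]
  set B : (Fin d → ℤ) → (Fin d → ℤ) → Circle := fun x y =>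
    ∏ ij : Fin d × Fin d, if ij.1 < ij.2 then χt (ee ij.1) (ee ij.2) ^ (x ij.1 * y ij.2) else 1
    with hBdef
  have B_zero_l : ∀ y, B 0 y = 1 := by
    intro y
    simp only [hBdef]
    refine Finset.prod_eq_one fun ij _ => ?_
    simp
  have B_zero_r : ∀ x, B x 0 = 1 := by
    intro x
    simp only [hBdef]
    refine Finset.prod_eq_one fun ij _ => ?_
    simp
  have B_add_l : ∀ x x' y, B (x + x') y = B x y * B x' y := by
    intro x x' y
    simp only [hBdef]
    rw [← Finset.prod_mul_distrib]
    refine Finset.prod_congr rfl fun ij _ => ?_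
    by_cases h : ij.1 < ij.2
    · simp only [if_pos h, Pi.add_apply, add_mul, zpow_add]
    · simp only [if_neg h, mul_one]
  have B_add_r : ∀ x y y', B x (y + y') = B x y * B x y' := by
    intro x y y'
    simp only [hBdef]
    rw [← Finset.prod_mul_distrib]
    refine Finset.prod_congr rfl fun ij _ => ?_
    by_cases h : ij.1 < ij.2
    · simp only [if_pos h, Pi.add_apply, mul_add, zpow_add]
    · simp only [if_neg h, mul_one]
  have B_div : ∀ x y, B x y / B y x = χt x y := by
    intro x y
    have hByx : B y x =
        (∏ ij : Fin d × Fin d, if ij.2 < ij.1 then χt (ee ij.1) (ee ij.2) ^ (x ij.1 * y ij.2) else 1)⁻¹ := by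
      simp only [hBdef]
      rw [← Finset.prod_inv_distrib]
      refine Fintype.prod_equiv (Equiv.prodComm (Fin d) (Fin d)) _ _ fun ij => ?_
      simp only [Equiv.prodComm_apply, Prod.snd_swap, Prod.fst_swap]
      by_cases h : ij.1 < ij.2
      · rw [if_pos h]; simp only [h, ↓reduceIte]; rw [chT_antisym (ee ij.1) (ee ij.2), inv_zpow, inv_inv,
          mul_comm (x ij.2) (y ij.1)]
      · rw [if_neg h]; simp only [h, ↓reduceIte, inv_one]
    rw [hByx, div_eq_mul_inv, inv_inv, ← Finset.prod_mul_distrib, chT_decomp,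
        ← Fintype.prod_prod_type (f := fun ij : Fin d × Fin d => χt (ee ij.1) (ee ij.2) ^ (x ij.1 * y ij.2))]
    refine Finset.prod_congr rfl fun ij _ => ?_
    rcases lt_trichotomy ij.1 ij.2 with h | h | h
    · rw [if_pos h, if_neg (by omega), mul_one]
    · rw [if_neg (by omega), if_neg (by omega), one_mul, h, chT_self, one_zpow]
    · rw [if_neg (by omega), if_pos h, one_mul]
  -- the symmetric cocycle on S
  have key : ∀ x y : Fin d → ℤ, x ∈ S → y ∈ S → (B x y : ℂ) * ω y x = (ω x y : ℂ) * B y x := by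
    intro x y hx hy
    have h1 : B x y / B y x = ω x y / ω y x := by
      rw [B_div, chT_eq_chi x y hx hy, hχ]
    have h1' := congrArg Subtype.val h1
    push_cast at h1'
    field_simp at h1'
    linear_combination h1'
  set sg : ↥S → ↥S → Circle := fun a b => ω a b / B a b with hsg
  have sg_coc : ∀ a b c : ↥S, sg a b * sg (a+b) c = sg a (b+c) * sg b c := by
    intro a b c
    have h := hcoc a b c a.2 b.2 c.2
    have h' : (ω (a:Fin d → ℤ) b : ℂ) * ω ((a:Fin d → ℤ) + b) c = (ω (a:Fin d → ℤ) ((b:Fin d → ℤ)+c) : ℂ) * ω b c := congrArg Subtype.val h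
    have hB : (B (a:Fin d → ℤ) b : ℂ) * B ((a:Fin d → ℤ)+b) c = (B (a:Fin d → ℤ) ((b:Fin d → ℤ)+c) : ℂ) * B b c := by
      rw [B_add_l, B_add_r]
      push_cast
      ring
    simp only [hsg, AddSubmonoid.coe_add]
    ext
    push_cast
    field_simp
    linear_combination (B (a:Fin d → ℤ) ((b:Fin d → ℤ)+c) : ℂ) * (B (b:Fin d → ℤ) c : ℂ) * h' - (ω (a:Fin d → ℤ) ((b:Fin d → ℤ)+c) : ℂ) * (ω (b:Fin d → ℤ) c : ℂ) * hB
  have sg_symm : ∀ a b : ↥S, sg a b = sg b a := by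
    intro a b
    have := key a b a.2 b.2
    simp only [hsg]
    ext
    push_cast
    field_simp
    linear_combination -this
  have sg_zl : ∀ a : ↥S, sg 0 a = 1 := by
    intro a
    simp only [hsg, ZeroMemClass.coe_zero]
    rw [(hnorm a a.2).1, B_zero_l]
    simp
  set DD : TwData ↥S := ⟨sg, sg_coc, sg_symm, sg_zl⟩ with hDD
  -- products of generators in the twisted monoid
  set Pp : (Fin d → ℕ) → Tw DD := fun k => ∏ i, (Tw.mk (⟨p (ee i), hpS (ee i)⟩ : ↥S) 1) ^ (k i) with hPp
  set Qq : (Fin d → ℕ) → Tw DD := fun k => ∏ i, (Tw.mk (⟨q (ee i), hqS (ee i)⟩ : ↥S) 1) ^ (k i) with hQq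
  have Pp_mul : ∀ k l, Pp (k + l) = Pp k * Pp l := by
    intro k l
    simp only [hPp]
    rw [← Finset.prod_mul_distrib]
    exact Finset.prod_congr rfl fun i _ => by rw [Pi.add_apply, pow_add]
  have Qq_mul : ∀ k l, Qq (k + l) = Qq k * Qq l := by
    intro k l
    simp only [hQq]
    rw [← Finset.prod_mul_distrib]
    exact Finset.prod_congr rfl fun i _ => by rw [Pi.add_apply, pow_add]
  have Pp_a : ∀ k, ((Pp k).a : Fin d → ℤ) = ∑ i, (k i : ℤ) • p (ee i) := by
    intro k
    simp only [hPp, Tw.a_prod, Tw.a_pow]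
    push_cast
    rfl
  have Qq_a : ∀ k, ((Qq k).a : Fin d → ℤ) = ∑ i, (k i : ℤ) • q (ee i) := by
    intro k
    simp only [hQq, Tw.a_prod, Tw.a_pow]
    push_cast
    rfl
  have hfst : ∀ (u : ↥S) (a c : Fin d → ℕ), (∀ i, (a i : ℤ) - c i = (u : Fin d → ℤ) i) →
      (Tw.mk u 1 * Pp c * Qq a).a = (Pp a * Qq c).a := by
    intro u a c hac
    apply Subtype.ext
    rw [Tw.a_mul, Tw.a_mul, Tw.a_mul]
    push_cast [Pp_a, Qq_a]
    rw [add_assoc, ← Finset.sum_add_distrib]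
    conv_lhs => rw [pi_decomp ((u : Fin d → ℤ))]
    rw [← Finset.sum_add_distrib, ← Finset.sum_add_distrib]
    refine Finset.sum_congr rfl fun i _ => ?_
    have h1 : p (ee i) = ee i + q (ee i) := by
      have h0 := (hpq (ee i)).symm
      rw [sub_eq_iff_eq_add] at h0
      exact h0
    have h2 : (a i : ℤ) = (u : Fin d → ℤ) i + (c i : ℤ) := by
      have := hac i; linarith
    rw [h1, h2]
    simp only [hee]
    module
  have sig_eq : DD.sig = sg := rfl
  -- independence of the choice of decomposition
  have indep : ∀ (u : ↥S) (a c a' c' : Fin d → ℕ),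
      (∀ i, (a i : ℤ) - c i = (u : Fin d → ℤ) i) →
      (∀ i, (a' i : ℤ) - c' i = (u : Fin d → ℤ) i) →
      (Tw.mk u 1 * Pp c * Qq a).z / (Pp a * Qq c).z
        = (Tw.mk u 1 * Pp c' * Qq a').z / (Pp a' * Qq c').z := by
    intro u a c a' c' hac hac'
    have h1 : a + c' = a' + c := by
      funext i
      have := hac i; have := hac' i
      have : (a i : ℤ) + c' i = (a' i : ℤ) + c i := by omega
      exact_mod_cast this
    have h2 : c + a' = c' + a := by
      funext i
      have := hac i; have := hac' i
      have : (c i : ℤ) + a' i = (c' i : ℤ) + a i := by omega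
      exact_mod_cast this
    have hprod : (Tw.mk u 1 * Pp c * Qq a) * (Pp a' * Qq c')
        = (Tw.mk u 1 * Pp c' * Qq a') * (Pp a * Qq c) := by
      calc (Tw.mk u 1 * Pp c * Qq a) * (Pp a' * Qq c')
          = Tw.mk u 1 * (Pp c * Pp a') * (Qq a * Qq c') := by ac_rfl
        _ = Tw.mk u 1 * Pp (c + a') * Qq (a + c') := by rw [Pp_mul, Qq_mul]
        _ = Tw.mk u 1 * Pp (c' + a) * Qq (a' + c) := by rw [h1, h2]
        _ = Tw.mk u 1 * (Pp c' * Pp a) * (Qq a' * Qq c) := by rw [Pp_mul, Qq_mul]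
        _ = (Tw.mk u 1 * Pp c' * Qq a') * (Pp a * Qq c) := by ac_rfl
    have hz := congrArg Tw.z hprod
    rw [Tw.z_mul ((Tw.mk u 1 * Pp c * Qq a)) (Pp a' * Qq c'),
        Tw.z_mul ((Tw.mk u 1 * Pp c' * Qq a')) (Pp a * Qq c)] at hz
    rw [← hfst u a' c' hac', ← hfst u a c hac] at hz
    rw [sig_eq] at hz
    rw [sg_symm] at hz
    have hz' := mul_right_cancel hz
    have hz'' : ((Tw.mk u 1 * Pp c * Qq a).z : ℂ) * (Pp a' * Qq c').z
        = ((Tw.mk u 1 * Pp c' * Qq a').z : ℂ) * (Pp a * Qq c).z := congrArg Subtype.val hz'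
    ext
    push_cast
    field_simp
    linear_combination hz''
  -- canonical decompositions and the coboundary function
  set An : ↥S → (Fin d → ℕ) := fun u i => ((u : Fin d → ℤ) i).toNat with hAn
  set Cn : ↥S → (Fin d → ℕ) := fun u i => (-(u : Fin d → ℤ) i).toNat with hCn
  have hACn : ∀ (u : ↥S) (i : Fin d), (An u i : ℤ) - Cn u i = (u : Fin d → ℤ) i := by
    intro u i
    simp only [hAn, hCn]
    omega
  set bb : ↥S → Circle := fun u =>
    (Tw.mk u 1 * Pp (Cn u) * Qq (An u)).z / (Pp (An u) * Qq (Cn u)).z with hbb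
  have iota : ∀ (z : Circle) (w : Tw DD), Tw.mk (0 : ↥S) z * w = Tw.mk w.a (z * w.z) := by
    intro z w
    refine Tw.ext' ?_ ?_
    · rw [Tw.a_mul, Tw.a_mk, zero_add]
    · rw [Tw.z_mul, Tw.a_mk, Tw.z_mk, Tw.z_mk, sig_eq, sg_zl, mul_one]
  have mk_add : ∀ u v : ↥S,
      Tw.mk (D := DD) u 1 * Tw.mk v 1 = Tw.mk (0 : ↥S) (sg u v) * Tw.mk (u + v) 1 := by
    intro u v
    rw [iota]
    refine Tw.ext' ?_ ?_
    · simp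
    · simp [Tw.z_mul, sig_eq]
  have cobound : ∀ u v : ↥S, bb u * bb v = sg u v * bb (u + v) := by
    intro u v
    have hXX : (Tw.mk u 1 * Pp (Cn u) * Qq (An u)) * (Tw.mk v 1 * Pp (Cn v) * Qq (An v))
        = Tw.mk (0:↥S) (sg u v) * (Tw.mk (u+v) 1 * Pp (Cn u + Cn v) * Qq (An u + An v)) := by
      calc (Tw.mk u 1 * Pp (Cn u) * Qq (An u)) * (Tw.mk v 1 * Pp (Cn v) * Qq (An v))
          = (Tw.mk u 1 * Tw.mk v 1) * (Pp (Cn u) * Pp (Cn v)) * (Qq (An u) * Qq (An v)) := by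
            ac_rfl
        _ = (Tw.mk (0:↥S) (sg u v) * Tw.mk (u+v) 1) * Pp (Cn u + Cn v) * Qq (An u + An v) := by
            rw [mk_add, Pp_mul, Qq_mul]
        _ = Tw.mk (0:↥S) (sg u v) * (Tw.mk (u+v) 1 * Pp (Cn u + Cn v) * Qq (An u + An v)) := by
            ac_rfl
    have hYY : (Pp (An u) * Qq (Cn u)) * (Pp (An v) * Qq (Cn v))
        = Pp (An u + An v) * Qq (Cn u + Cn v) := by
      calc (Pp (An u) * Qq (Cn u)) * (Pp (An v) * Qq (Cn v))
          = (Pp (An u) * Pp (An v)) * (Qq (Cn u) * Qq (Cn v)) := by ac_rfl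
        _ = Pp (An u + An v) * Qq (Cn u + Cn v) := by rw [Pp_mul, Qq_mul]
    have hXz := congrArg Tw.z hXX
    rw [Tw.z_mul (Tw.mk u 1 * Pp (Cn u) * Qq (An u)) (Tw.mk v 1 * Pp (Cn v) * Qq (An v)),
        iota, Tw.z_mk] at hXz
    have hYz := congrArg Tw.z hYY
    rw [Tw.z_mul (Pp (An u) * Qq (Cn u)) (Pp (An v) * Qq (Cn v))] at hYz
    rw [← hfst u (An u) (Cn u) (hACn u), ← hfst v (An v) (Cn v) (hACn v)] at hYz
    have hb3 : bb (u+v) = (Tw.mk (u+v) 1 * Pp (Cn u + Cn v) * Qq (An u + An v)).z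
        / (Pp (An u + An v) * Qq (Cn u + Cn v)).z := by
      have hval : ∀ i, ((An u + An v) i : ℤ) - ((Cn u + Cn v) i : ℤ)
          = ((u+v : ↥S) : Fin d → ℤ) i := by
        intro i
        have h1 := hACn u i
        have h2 := hACn v i
        push_cast [Pi.add_apply]
        omega
      simp only [hbb]
      exact indep (u+v) (An (u+v)) (Cn (u+v)) (An u + An v) (Cn u + Cn v) (hACn (u+v)) hval
    have hXz' := congrArg Subtype.val hXz
    have hYz' := congrArg Subtype.val hYz
    rw [hb3]
    simp only [hbb]
    ext
    push_cast at hXz' hYz' ⊢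
    field_simp at hXz' hYz' ⊢
    linear_combination ((Pp (An u) * Qq (Cn u)).z : ℂ) * ((Pp (An v) * Qq (Cn v)).z : ℂ) * hXz'
      - ((Tw.mk u 1 * Pp (Cn u) * Qq (An u)).z : ℂ) * ((Tw.mk v 1 * Pp (Cn v) * Qq (An v)).z : ℂ) * hYz'
  have bb_zero : bb 0 = 1 := by
    have hA0 : An 0 = 0 := by
      funext i
      simp only [hAn]
      rw [ZeroMemClass.coe_zero]
      rfl
    have hC0 : Cn 0 = 0 := by
      funext i
      simp only [hCn]
      rw [ZeroMemClass.coe_zero]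
      rfl
    have hP0 : Pp 0 = 1 := by
      simp only [hPp]
      refine Finset.prod_eq_one fun i _ => ?_
      rw [Pi.zero_apply, pow_zero]
    have hQ0 : Qq 0 = 1 := by
      simp only [hQq]
      refine Finset.prod_eq_one fun i _ => ?_
      rw [Pi.zero_apply, pow_zero]
    simp only [hbb, hA0, hC0, hP0, hQ0]
    rw [mul_one, mul_one, one_mul]
    have : Tw.mk (0 : ↥S) (1 : Circle) = (1 : Tw DD) := rfl
    rw [this, Tw.z_one]
    simp
  -- the extension of the multiplier
  set bt : (Fin d → ℤ) → Circle := fun x => if h : x ∈ S then bb ⟨x, h⟩ else 1 with hbt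
  have bt_mem : ∀ (x : Fin d → ℤ) (hx : x ∈ S), bt x = bb ⟨x, hx⟩ := by
    intro x hx
    simp only [hbt, dif_pos hx]
  have bt_zero : bt 0 = 1 := by
    rw [bt_mem 0 S.zero_mem]
    have h0 : (⟨0, S.zero_mem⟩ : ↥S) = 0 := rfl
    rw [h0, bb_zero]
  refine ⟨fun x y => B x y * (bt x * bt y / bt (x + y)), ?_, ?_, ?_⟩
  · intro r s t
    have hBc : (B r s : ℂ) * B (r+s) t = (B r (s+t) : ℂ) * B s t := by
      rw [B_add_l, B_add_r]
      push_cast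
      ring
    show B r s * (bt r * bt s / bt (r + s)) * (B (r+s) t * (bt (r+s) * bt t / bt (r + s + t)))
        = B r (s+t) * (bt r * bt (s+t) / bt (r + (s + t))) * (B s t * (bt s * bt t / bt (s + t)))
    rw [← add_assoc r s t]
    ext
    push_cast
    field_simp
    linear_combination hBc
  · intro x
    constructor
    · show B 0 x * (bt 0 * bt x / bt (0 + x)) = 1
      rw [B_zero_l, bt_zero, zero_add, one_mul, one_mul, div_self']
    · show B x 0 * (bt x * bt 0 / bt (x + 0)) = 1
      rw [B_zero_r, bt_zero, add_zero, one_mul, mul_one, div_self']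
  · intro r hr s hs
    have h1 := cobound ⟨r, hr⟩ ⟨s, hs⟩
    have hsum : (⟨r, hr⟩ + ⟨s, hs⟩ : ↥S) = ⟨r + s, S.add_mem hr hs⟩ := rfl
    rw [hsum] at h1
    have hsg' : sg ⟨r, hr⟩ ⟨s, hs⟩ = ω r s / B r s := rfl
    rw [hsg'] at h1
    show B r s * (bt r * bt s / bt (r + s)) = ω r s
    rw [bt_mem r hr, bt_mem s hs, bt_mem (r+s) (S.add_mem hr hs)]
    have h1' : (bb ⟨r, hr⟩ : ℂ) * bb ⟨s, hs⟩
        = (ω r s : ℂ) / (B r s : ℂ) * bb ⟨r + s, S.add_mem hr hs⟩ := by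
      have := congrArg Subtype.val h1
      push_cast at this
      exact this
    ext
    push_cast
    field_simp at h1' ⊢
    linear_combination h1'
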